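/- arXiv:1805.08287 — 6 statements merged into one kernel-verified Lean document; each statement's English description precedes it below -/
import Mathlib

section
/- If G is a graph with loops on n vertices in which all vertex degrees are distinct, then the non-decreasing degree sequence of G is either (1,2,…,n) or (0,1,…,n−1). -/
/-- Degree of vertex `i` in a graph with loops given by a symmetric boolean
adjacency matrix `A` (a loop contributes 1 to the degree). -/
def loopDegree {n : ℕ} (A : Fin n → Fin n → Bool) (i : Fin n) : ℕ :=
  (Finset.univ.filter fun j => A i j).card

lemma loopDegree_le {n : ℕ} (A : Fin n → Fin n → Bool) (i : Fin n) :
    loopDegree A i ≤ n := by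
  simpa [loopDegree] using Finset.card_filter_le (Finset.univ : Finset (Fin n)) _

/-- If all vertex degrees of a graph with loops on `n` vertices are distinct,
then the set of degrees is either `{1,2,…,n}` or `{0,1,…,n-1}`. -/
theorem antiRegular_degree_sequence {n : ℕ} (A : Fin n → Fin n → Bool)
    (hsym : ∀ i j, A i j = A j i) (hinj : Function.Injective (loopDegree A)) :
    Finset.image (loopDegree A) Finset.univ = Finset.Icc 1 n ∨
    Finset.image (loopDegree A) Finset.univ = Finset.Icc 0 (n - 1) := by
  rcases Nat.eq_zero_or_pos n with h0 | hn
  · subst h0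
    left
    ext x
    simp
  have hcard : (Finset.image (loopDegree A) Finset.univ).card = n := by
    rw [Finset.card_image_of_injective _ hinj, Finset.card_univ, Fintype.card_fin]
  by_cases hN : n ∈ Finset.image (loopDegree A) Finset.univ
  · left
    obtain ⟨i, -, hi⟩ := Finset.mem_image.mp hN
    have hiall : ∀ j, A i j = true := by
      have : (Finset.univ.filter fun j => A i j) = Finset.univ := by
        apply Finset.eq_univ_of_card
        simpa [Fintype.card_fin, loopDegree] using hi
      intro j
      have hj : j ∈ Finset.univ.filter fun j => A i j := by
        rw [this]; exact Finset.mem_univ j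
      simpa using hj
    apply Finset.eq_of_subset_of_card_le
    · intro d hd
      obtain ⟨k, -, hk⟩ := Finset.mem_image.mp hd
      rw [Finset.mem_Icc]
      refine ⟨?_, hk ▸ loopDegree_le A k⟩
      rw [← hk]
      have : i ∈ Finset.univ.filter fun j => A k j := by
        simp [hsym k i, hiall k]
      exact Finset.card_pos.mpr ⟨i, this⟩
    · rw [hcard, Nat.card_Icc]; omega
  · right
    apply Finset.eq_of_subset_of_card_le
    · intro d hd
      obtain ⟨k, -, hk⟩ := Finset.mem_image.mp hd
      rw [Finset.mem_Icc]
      refine ⟨Nat.zero_le _, ?_⟩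
      have hle := hk ▸ loopDegree_le A k
      have hne : d ≠ n := fun h => hN (h ▸ hd)
      omega
    · rw [hcard, Nat.card_Icc]
      omega
end

section
/- Let b = (b_1,…,b_n) ∈ {0,1}^n and let A be the n×n symmetric matrix with A_{ij} = b_{max(i,j)}. If b is the alternating sequence with b_n = 1 (i.e., b_j = 1 iff j ≡ n mod 2), then the graph with loops whose adjacency matrix is A has degree sequence (1,2,…,n) with all degrees distinct. -/
lemma fin_val_max {n : ℕ} (i j : Fin n) : ((max i j : Fin n) : ℕ) = max (i : ℕ) (j : ℕ) := by
  rcases le_total i j with h | h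
  · rw [max_eq_right h, max_eq_right (Fin.le_def.mp h)]
  · rw [max_eq_left h, max_eq_left (Fin.le_def.mp h)]

lemma sum_parity (n m : ℕ) :
    (∑ j ∈ Finset.range m, if (j + 1) % 2 = n % 2 then 1 else 0) = (m + n % 2) / 2 := by
  induction m with
  | zero => simp
  | succ m ih =>
    rw [Finset.sum_range_succ, ih]
    split <;> omega

lemma deg_formula {n : ℕ} (b : Fin n → Bool)
    (hb : ∀ j : Fin n, b j = true ↔ ((j : ℕ) + 1) % 2 = n % 2)
    (A : Fin n → Fin n → Bool) (hA : ∀ i j, A i j = b (max i j)) (i : Fin n) :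
    loopDegree A i =
      if ((i : ℕ) + 1) % 2 = n % 2 then (n + (i : ℕ) + 1) / 2 else (n - (i : ℕ)) / 2 := by
  have hcond : ∀ j : Fin n,
      (A i j = true) ↔ ((max (i : ℕ) (j : ℕ) + 1) % 2 = n % 2) := by
    intro j
    rw [hA, hb, fin_val_max]
  have key : loopDegree A i =
      ∑ j ∈ Finset.range n, (fun m : ℕ =>
        if (max (i : ℕ) m + 1) % 2 = n % 2 then 1 else 0) j := by
    rw [← Fin.sum_univ_eq_sum_range]
    unfold loopDegree
    rw [Finset.card_filter]
    exact Finset.sum_congr rfl fun j _ => if_congr (hcond j) rfl rfl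
  have hin : (i : ℕ) + 1 ≤ n := i.isLt
  rw [key, Finset.range_eq_Ico,
    ← Finset.sum_Ico_consecutive _ (Nat.zero_le ((i : ℕ) + 1)) hin]
  have h1 : (∑ j ∈ Finset.Ico 0 ((i : ℕ) + 1),
      (if (max (i : ℕ) j + 1) % 2 = n % 2 then 1 else 0))
      = ((i : ℕ) + 1) * (if ((i : ℕ) + 1) % 2 = n % 2 then 1 else 0) := by
    have : ∀ j ∈ Finset.Ico 0 ((i : ℕ) + 1),
        (if (max (i : ℕ) j + 1) % 2 = n % 2 then 1 else 0)
        = (if ((i : ℕ) + 1) % 2 = n % 2 then 1 else 0) := by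
      intro j hj
      simp only [Finset.mem_Ico] at hj
      rw [max_eq_left (by omega)]
    rw [Finset.sum_congr rfl this, Finset.sum_const, Nat.card_Ico, smul_eq_mul]
    simp
  have h2 : (∑ j ∈ Finset.Ico ((i : ℕ) + 1) n,
      (if (max (i : ℕ) j + 1) % 2 = n % 2 then 1 else 0))
      = (n + n % 2) / 2 - ((i : ℕ) + 1 + n % 2) / 2 := by
    have e1 : ∀ j ∈ Finset.Ico ((i : ℕ) + 1) n,
        (if (max (i : ℕ) j + 1) % 2 = n % 2 then 1 else 0)
        = (if (j + 1) % 2 = n % 2 then 1 else 0) := by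
      intro j hj
      simp only [Finset.mem_Ico] at hj
      rw [max_eq_right (by omega)]
    rw [Finset.sum_congr rfl e1]
    have e2 := Finset.sum_Ico_consecutive
      (fun j => if (j + 1) % 2 = n % 2 then 1 else 0)
      (Nat.zero_le ((i : ℕ) + 1)) hin
    beta_reduce at e2
    have s1 := sum_parity n n
    have s2 := sum_parity n ((i : ℕ) + 1)
    rw [Finset.range_eq_Ico] at s1 s2
    omega
  rw [h1, h2]
  split <;> omega

/-- If `b` is the alternating binary sequence with `b_n = 1` (that is,
`b_j = 1` iff `j ≡ n (mod 2)`, `1`-indexed), then the threshold graph with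
loops with adjacency `A i j = b (max i j)` has all degrees distinct, with
degree set `{1,2,…,n}`. -/
theorem alternating_threshold_is_antiRegular (n : ℕ) (b : Fin n → Bool)
    (hb : ∀ j : Fin n, b j = true ↔ ((j : ℕ) + 1) % 2 = n % 2)
    (A : Fin n → Fin n → Bool) (hA : ∀ i j, A i j = b (max i j)) :
    Function.Injective (loopDegree A) ∧
    Finset.image (loopDegree A) Finset.univ = Finset.Icc 1 n := by
  have hd := deg_formula b hb A hA
  have hinj : Function.Injective (loopDegree A) := by
    intro i j h
    rw [hd i, hd j] at h
    have hi := i.isLt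
    have hj := j.isLt
    apply Fin.ext
    split_ifs at h <;> omega
  refine ⟨hinj, ?_⟩
  apply Finset.eq_of_subset_of_card_le
  · intro m hm
    simp only [Finset.mem_image, Finset.mem_univ, true_and] at hm
    obtain ⟨i, rfl⟩ := hm
    rw [hd i]
    have hi := i.isLt
    simp only [Finset.mem_Icc]
    split <;> omega
  · rw [Finset.card_image_of_injective _ hinj]
    simp [Nat.card_Icc]
end

section
/- Let M_n be the n×n 0-1 Hankel matrix with (M_n)_{ij} = 1 if and only if i + j ≥ n + 1. Then the adjacency matrix of the connected anti-regular graph with loops on n vertices (the matrix A with A_{ij} = b_{max(i,j)} where b_j = 1 iff j ≡ n mod 2) is permutation similar to M_n. -/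
/-- The `n × n` 0-1 Hankel matrix with ones on and below the anti-diagonal:
`(M_n)_{ij} = 1` iff `i + j ≥ n + 1` (in `1`-indexed terms). -/
def hankelM (n : ℕ) : Matrix (Fin n) (Fin n) ℝ :=
  Matrix.of fun i j => if n ≤ (i : ℕ) + (j : ℕ) + 1 then 1 else 0

/-- The adjacency matrix of the connected anti-regular graph with loops `G_n`
(given by the alternating binary sequence `b_j = 1` iff `j ≡ n (mod 2)`) is
permutation similar to the Hankel matrix `M_n`. -/
theorem antiRegular_perm_similar_hankel (n : ℕ) (b : Fin n → Bool)
    (hb : ∀ j : Fin n, b j = true ↔ ((j : ℕ) + 1) % 2 = n % 2)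
    (A : Matrix (Fin n) (Fin n) ℝ)
    (hA : ∀ i j, A i j = if b (max i j) then 1 else 0) :
    ∃ e : Equiv.Perm (Fin n), ∀ i j, A i j = hankelM n (e i) (e j) := by
  classical
  have hlt1 : ∀ i : Fin n, (n - 1 + (i : ℕ)) / 2 < n := fun i => by
    have := i.2; omega
  have hlt2 : ∀ i : Fin n, (n - 2 - (i : ℕ)) / 2 < n := fun i => by
    have := i.2; omega
  let f : Fin n → Fin n := fun i =>
    if ((i : ℕ) + 1) % 2 = n % 2 then ⟨(n - 1 + (i : ℕ)) / 2, hlt1 i⟩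
    else ⟨(n - 2 - (i : ℕ)) / 2, hlt2 i⟩
  have hf : ∀ i : Fin n, (f i : ℕ) =
      if ((i : ℕ) + 1) % 2 = n % 2 then (n - 1 + (i : ℕ)) / 2
      else (n - 2 - (i : ℕ)) / 2 := by
    intro i; simp only [f]; split <;> rfl
  have hinj : Function.Injective f := by
    intro i j hij
    have h1 := hf i
    have h2 := hf j
    rw [hij] at h1
    have hi := i.2; have hj := j.2
    apply Fin.ext
    split at h1 <;> split at h2 <;> omega
  refine ⟨Equiv.ofBijective f (Finite.injective_iff_bijective.mp hinj), ?_⟩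
  intro i j
  rw [hA]
  simp only [hankelM, Matrix.of_apply, Equiv.ofBijective_apply]
  have h1 := hf i
  have h2 := hf j
  have hi := i.2; have hj := j.2
  have key : (b (max i j) = true) ↔ n ≤ (f i : ℕ) + (f j : ℕ) + 1 := by
    rcases le_total i j with h | h
    · rw [max_eq_right h, hb j]
      have hij : (i : ℕ) ≤ (j : ℕ) := h
      split at h1 <;> split at h2 <;> omega
    · rw [max_eq_left h, hb i]
      have hij : (j : ℕ) ≤ (i : ℕ) := h
      split at h1 <;> split at h2 <;> omega
  by_cases hc : b (max i j) = true
  · rw [if_pos hc, if_pos (key.mp hc)]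
  · rw [if_neg hc, if_neg (fun hcon => hc (key.mpr hcon))]
end

section
/- The n×n anti-bidiagonal 0-1 matrix Y with Y_{ij} = 1 iff i + j ∈ {n, n+1} is permutation similar to the tridiagonal matrix T with T_{ij} = 1 if |i−j| = 1, T_{nn} = 1, and all other entries 0. -/
/-- The `n × n` tridiagonal matrix `T` with `T_{ij} = 1` for `|i − j| = 1`,
`T_{nn} = 1`, and zeros elsewhere. -/
def pathLoopT (n : ℕ) : Matrix (Fin n) (Fin n) ℝ :=
  Matrix.of fun i j =>
    if (i : ℕ) + 1 = (j : ℕ) ∨ (j : ℕ) + 1 = (i : ℕ) then 1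
    else if i = j ∧ (i : ℕ) + 1 = n then 1 else 0

/-- The anti-bidiagonal 0-1 matrix `Y` with `Y_{ij} = 1` iff `i + j ∈ {n, n+1}`
(`1`-indexed) is permutation similar to the tridiagonal matrix `T`. -/
theorem antiBidiagonal_perm_similar_tridiagonal (n : ℕ) :
    ∃ e : Equiv.Perm (Fin n), ∀ i j : Fin n,
      (if (i : ℕ) + (j : ℕ) + 2 = n ∨ (i : ℕ) + (j : ℕ) + 2 = n + 1
        then (1 : ℝ) else 0) = pathLoopT n (e i) (e j) := by
  set f : Fin n → Fin n := fun v =>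
    if h : 2 * (v : ℕ) + 1 < n then ⟨2 * (v : ℕ) + 1, h⟩
    else ⟨2 * (n - 1 - (v : ℕ)), by have := v.isLt; omega⟩ with hf
  have key : ∀ v : Fin n,
      ((f v : ℕ) = 2 * (v : ℕ) + 1 ∧ 2 * (v : ℕ) + 1 < n) ∨
      ((f v : ℕ) = 2 * (n - 1 - (v : ℕ)) ∧ ¬ 2 * (v : ℕ) + 1 < n) := by
    intro v
    by_cases h : 2 * (v : ℕ) + 1 < n
    · left; exact ⟨by simp [hf, h], h⟩
    · right; exact ⟨by simp [hf, h], h⟩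
  have hinj : Function.Injective f := by
    intro a b hab
    have hka := key a
    have hkb := key b
    have h : (f a : ℕ) = (f b : ℕ) := congrArg Fin.val hab
    have ha := a.isLt
    have hb := b.isLt
    apply Fin.ext
    omega
  refine ⟨Equiv.ofBijective f (Finite.injective_iff_bijective.mp hinj), ?_⟩
  intro i j
  have hki := key i
  have hkj := key j
  have hi := i.isLt
  have hj := j.isLt
  show _ = pathLoopT n (f i) (f j)
  rw [pathLoopT]
  simp only [Matrix.of_apply, Fin.ext_iff]
  split_ifs <;> first | rfl | omega
end

section
/- The eigenvalues of the n×n 0-1 Hankel matrix M_n (with (M_n)_{ij} = 1 iff i + j ≥ n+1) are λ_j = (−1)^{n+1} / (2 cos((2j−1)π/(2n+1))) for j = 1,…,n, and these are pairwise distinct. -/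
open Real Matrix Polynomial Finset


def hankelN (n : ℕ) : Matrix (Fin n) (Fin n) ℝ :=
  Matrix.of fun i j => if (i : ℕ) + (j : ℕ) + 1 = n then 1
    else if (i : ℕ) + (j : ℕ) + 2 = n then -1 else 0

lemma hankelM_mul_hankelN (n : ℕ) : hankelM n * hankelN n = 1 := by
  ext i k
  have hk : (k : ℕ) < n := k.isLt
  have hi : (i : ℕ) < n := i.isLt
  rw [Matrix.mul_apply, Matrix.one_apply]
  by_cases h2 : (k : ℕ) + 2 ≤ n
  · have hk1 : n - 1 - (k : ℕ) < n := by omega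
    have hk2 : n - 2 - (k : ℕ) < n := by omega
    have hne : (⟨n - 1 - (k : ℕ), hk1⟩ : Fin n) ≠ ⟨n - 2 - (k : ℕ), hk2⟩ := by
      simp only [ne_eq, Fin.mk.injEq]; omega
    rw [← Finset.sum_subset (Finset.subset_univ
        {(⟨n - 1 - (k : ℕ), hk1⟩ : Fin n), ⟨n - 2 - (k : ℕ), hk2⟩})
        (fun j _ hj => ?_), Finset.sum_pair hne]
    · have e1 : hankelN n ⟨n - 1 - (k : ℕ), hk1⟩ k = 1 := by
        simp only [hankelN, Matrix.of_apply]
        rw [if_pos (show n - 1 - (k : ℕ) + (k : ℕ) + 1 = n by omega)]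
      have e2 : hankelN n ⟨n - 2 - (k : ℕ), hk2⟩ k = -1 := by
        simp only [hankelN, Matrix.of_apply]
        rw [if_neg (by omega), if_pos (by omega)]
      have e3 : hankelM n i ⟨n - 1 - (k : ℕ), hk1⟩ = if (k : ℕ) ≤ (i : ℕ) then 1 else 0 := by
        simp only [hankelM, Matrix.of_apply]
        by_cases h : (k : ℕ) ≤ (i : ℕ)
        · rw [if_pos (by omega : n ≤ (i : ℕ) + (n - 1 - (k : ℕ)) + 1), if_pos h]
        · rw [if_neg (by omega : ¬ n ≤ (i : ℕ) + (n - 1 - (k : ℕ)) + 1), if_neg h]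
      have e4 : hankelM n i ⟨n - 2 - (k : ℕ), hk2⟩ = if (k : ℕ) + 1 ≤ (i : ℕ) then 1 else 0 := by
        simp only [hankelM, Matrix.of_apply]
        by_cases h : (k : ℕ) + 1 ≤ (i : ℕ)
        · rw [if_pos (by omega : n ≤ (i : ℕ) + (n - 2 - (k : ℕ)) + 1), if_pos h]
        · rw [if_neg (by omega : ¬ n ≤ (i : ℕ) + (n - 2 - (k : ℕ)) + 1), if_neg h]
      rw [e1, e2, e3, e4]
      simp only [Fin.ext_iff]
      split_ifs <;> first | (exfalso; omega) | norm_num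
    · simp only [Finset.mem_insert, Finset.mem_singleton, not_or] at hj
      simp only [hankelN, Matrix.of_apply]
      rw [if_neg, if_neg, mul_zero]
      · intro hcon; exact hj.2 (Fin.ext (show (j : ℕ) = n - 2 - (k : ℕ) by omega))
      · intro hcon; exact hj.1 (Fin.ext (show (j : ℕ) = n - 1 - (k : ℕ) by omega))
  · have hk1 : n - 1 - (k : ℕ) < n := by omega
    rw [← Finset.sum_subset (Finset.subset_univ {(⟨n - 1 - (k : ℕ), hk1⟩ : Fin n)})
        (fun j _ hj => ?_), Finset.sum_singleton]
    · have e1 : hankelN n ⟨n - 1 - (k : ℕ), hk1⟩ k = 1 := by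
        simp only [hankelN, Matrix.of_apply]
        rw [if_pos (show n - 1 - (k : ℕ) + (k : ℕ) + 1 = n by omega)]
      have e3 : hankelM n i ⟨n - 1 - (k : ℕ), hk1⟩ = if (k : ℕ) ≤ (i : ℕ) then 1 else 0 := by
        simp only [hankelM, Matrix.of_apply]
        by_cases h : (k : ℕ) ≤ (i : ℕ)
        · rw [if_pos (by omega : n ≤ (i : ℕ) + (n - 1 - (k : ℕ)) + 1), if_pos h]
        · rw [if_neg (by omega : ¬ n ≤ (i : ℕ) + (n - 1 - (k : ℕ)) + 1), if_neg h]
      rw [e1, e3]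
      simp only [Fin.ext_iff]
      split_ifs <;> first | (exfalso; omega) | norm_num
    · simp only [Finset.mem_singleton] at hj
      simp only [hankelN, Matrix.of_apply]
      rw [if_neg, if_neg, mul_zero]
      · omega
      · intro hcon; exact hj (Fin.ext (show (j : ℕ) = n - 1 - (k : ℕ) by omega))

noncomputable def eigVec (n : ℕ) (θ : ℝ) : Fin n → ℝ :=
  fun i => (-1 : ℝ) ^ (i : ℕ) * Real.sin ((2 * (i : ℕ) + 2) * θ)

lemma key_core (a : ℕ) (θ : ℝ) :
    Real.sin ((2 * (a : ℝ) + 1) * θ) + Real.sin ((2 * (a : ℝ) + 3) * θ)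
      = 2 * Real.cos θ * Real.sin ((2 * (a : ℝ) + 2) * θ) := by
  have e1 : (2 * (a : ℝ) + 1) * θ = (2 * (a : ℝ) + 2) * θ - θ := by ring
  have e3 : (2 * (a : ℝ) + 3) * θ = (2 * (a : ℝ) + 2) * θ + θ := by ring
  rw [e1, e3, Real.sin_sub, Real.sin_add]; ring

lemma neg_one_sq_pow (a : ℕ) : (-1 : ℝ) ^ a * (-1 : ℝ) ^ a = 1 := by
  rw [← pow_add, ← two_mul, pow_mul]; norm_num

/-- two-term case: `i = a`, `j₁ = b`, `j₀ = b + 1`, `n = a + b + 2`. -/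
lemma key1 (a b : ℕ) (θ : ℝ)
    (hs : Real.sin ((2 * ((a : ℝ) + (b : ℝ) + 2) + 1) * θ) = 0)
    (hc : Real.cos ((2 * ((a : ℝ) + (b : ℝ) + 2) + 1) * θ) = -1) :
    (-1 : ℝ) ^ (b + 1) * Real.sin ((2 * ((b : ℝ) + 1) + 2) * θ)
      - (-1 : ℝ) ^ b * Real.sin ((2 * (b : ℝ) + 2) * θ)
    = ((-1 : ℝ) ^ (a + b + 2 + 1) * (2 * Real.cos θ))
        * ((-1 : ℝ) ^ a * Real.sin ((2 * (a : ℝ) + 2) * θ)) := by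
  have f1 : Real.sin ((2 * ((b : ℝ) + 1) + 2) * θ) = Real.sin ((2 * (a : ℝ) + 1) * θ) := by
    have e : (2 * ((b : ℝ) + 1) + 2) * θ
        = (2 * ((a : ℝ) + (b : ℝ) + 2) + 1) * θ - (2 * (a : ℝ) + 1) * θ := by ring
    rw [e, Real.sin_sub, hs, hc]; ring
  have f2 : Real.sin ((2 * (b : ℝ) + 2) * θ) = Real.sin ((2 * (a : ℝ) + 3) * θ) := by
    have e : (2 * (b : ℝ) + 2) * θ
        = (2 * ((a : ℝ) + (b : ℝ) + 2) + 1) * θ - (2 * (a : ℝ) + 3) * θ := by ring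
    rw [e, Real.sin_sub, hs, hc]; ring
  rw [f1, f2]
  have core := key_core a θ
  have hsq := neg_one_sq_pow a
  linear_combination (-(-1 : ℝ) ^ b) * core
    + ((-1 : ℝ) ^ b * (2 * Real.cos θ) * Real.sin ((2 * (a : ℝ) + 2) * θ)) * hsq

/-- one-term case: `i = a = n - 1`, `j₀ = 0`, `n = a + 1`. -/
lemma key2 (a : ℕ) (θ : ℝ)
    (hs : Real.sin ((2 * ((a : ℝ) + 1) + 1) * θ) = 0)
    (hc : Real.cos ((2 * ((a : ℝ) + 1) + 1) * θ) = -1) :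
    Real.sin ((2 * (0 : ℝ) + 2) * θ)
      = ((-1 : ℝ) ^ (a + 1 + 1) * (2 * Real.cos θ))
        * ((-1 : ℝ) ^ a * Real.sin ((2 * (a : ℝ) + 2) * θ)) := by
  have f : Real.sin ((2 * (a : ℝ) + 2) * θ) = Real.sin θ := by
    have e : (2 * (a : ℝ) + 2) * θ = (2 * ((a : ℝ) + 1) + 1) * θ - θ := by ring
    rw [e, Real.sin_sub, hs, hc]; ring
  rw [f]
  have e2 : (2 * (0 : ℝ) + 2) * θ = 2 * θ := by ring
  rw [e2, Real.sin_two_mul]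
  have hsq := neg_one_sq_pow a
  linear_combination (-(2 * Real.sin θ * Real.cos θ)) * hsq

lemma hankelN_mulVec (n : ℕ) (θ : ℝ)
    (hs : Real.sin ((2 * (n : ℝ) + 1) * θ) = 0)
    (hc : Real.cos ((2 * (n : ℝ) + 1) * θ) = -1) :
    (hankelN n).mulVec (eigVec n θ)
      = ((-1 : ℝ) ^ (n + 1) * (2 * Real.cos θ)) • eigVec n θ := by
  funext i
  have hi : (i : ℕ) < n := i.isLt
  rw [Pi.smul_apply, smul_eq_mul]
  simp only [Matrix.mulVec, dotProduct]
  by_cases h2 : (i : ℕ) + 2 ≤ n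
  · set b : ℕ := n - 2 - (i : ℕ) with hbdef
    have hn : (i : ℕ) + b + 2 = n := by omega
    have hcast : ((i : ℕ) : ℝ) + (b : ℝ) + 2 = (n : ℝ) := by
      have := congrArg (Nat.cast : ℕ → ℝ) hn
      push_cast at this
      linarith
    have hb0 : b + 1 < n := by omega
    have hb1 : b < n := by omega
    have hne : (⟨b + 1, hb0⟩ : Fin n) ≠ ⟨b, hb1⟩ := by
      simp only [ne_eq, Fin.mk.injEq]; omega
    rw [← Finset.sum_subset (Finset.subset_univ
        {(⟨b + 1, hb0⟩ : Fin n), ⟨b, hb1⟩})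
        (fun j _ hj => ?_), Finset.sum_pair hne]
    · have e0 : hankelN n i ⟨b + 1, hb0⟩ = 1 := by
        simp only [hankelN, Matrix.of_apply]
        rw [if_pos (show (i : ℕ) + (b + 1) + 1 = n by omega)]
      have e1 : hankelN n i ⟨b, hb1⟩ = -1 := by
        simp only [hankelN, Matrix.of_apply]
        rw [if_neg (by omega), if_pos (by omega)]
      rw [e0, e1, one_mul, neg_one_mul,
        show n + 1 = (i : ℕ) + b + 2 + 1 by omega]
      simp only [eigVec]
      have hs' : Real.sin ((2 * (((i : ℕ) : ℝ) + (b : ℝ) + 2) + 1) * θ) = 0 := by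
        rw [show (2 * (((i : ℕ) : ℝ) + (b : ℝ) + 2) + 1) = 2 * (n : ℝ) + 1 by
          rw [hcast]]
        exact hs
      have hc' : Real.cos ((2 * (((i : ℕ) : ℝ) + (b : ℝ) + 2) + 1) * θ) = -1 := by
        rw [show (2 * (((i : ℕ) : ℝ) + (b : ℝ) + 2) + 1) = 2 * (n : ℝ) + 1 by
          rw [hcast]]
        exact hc
      have := key1 (i : ℕ) b θ hs' hc'
      push_cast
      push_cast at this
      linear_combination this
    · simp only [Finset.mem_insert, Finset.mem_singleton, not_or] at hj
      simp only [hankelN, Matrix.of_apply]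
      rw [if_neg, if_neg, zero_mul]
      · intro hcon; exact hj.2 (Fin.ext (show (j : ℕ) = b by omega))
      · intro hcon; exact hj.1 (Fin.ext (show (j : ℕ) = b + 1 by omega))
  · have hn : (i : ℕ) + 1 = n := by omega
    have hcast : ((i : ℕ) : ℝ) + 1 = (n : ℝ) := by
      have := congrArg (Nat.cast : ℕ → ℝ) hn
      push_cast at this
      linarith
    have hb0 : 0 < n := by omega
    rw [← Finset.sum_subset (Finset.subset_univ {(⟨0, hb0⟩ : Fin n)})
        (fun j _ hj => ?_), Finset.sum_singleton]
    · have e0 : hankelN n i ⟨0, hb0⟩ = 1 := by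
        simp only [hankelN, Matrix.of_apply]
        rw [if_pos (show (i : ℕ) + 0 + 1 = n by omega)]
      rw [e0, one_mul, show n + 1 = (i : ℕ) + 1 + 1 by omega]
      simp only [eigVec]
      have hs' : Real.sin ((2 * (((i : ℕ) : ℝ) + 1) + 1) * θ) = 0 := by
        rw [show (2 * (((i : ℕ) : ℝ) + 1) + 1) = 2 * (n : ℝ) + 1 by rw [hcast]]
        exact hs
      have hc' : Real.cos ((2 * (((i : ℕ) : ℝ) + 1) + 1) * θ) = -1 := by
        rw [show (2 * (((i : ℕ) : ℝ) + 1) + 1) = 2 * (n : ℝ) + 1 by rw [hcast]]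
        exact hc
      have := key2 (i : ℕ) θ hs' hc'
      push_cast
      push_cast at this
      linear_combination this
    · simp only [Finset.mem_singleton] at hj
      simp only [hankelN, Matrix.of_apply]
      rw [if_neg, if_neg, zero_mul]
      · omega
      · intro hcon; exact hj (Fin.ext (show (j : ℕ) = 0 by omega))

section theta

variable (n : ℕ) (j : Fin n)

noncomputable def θj (n : ℕ) (j : Fin n) : ℝ :=
  (2 * ((j : ℕ) : ℝ) + 1) * Real.pi / (2 * (n : ℝ) + 1)

lemma h2n : (2 * (n : ℝ) + 1) ≠ 0 := by positivity

lemma theta_mul : (2 * (n : ℝ) + 1) * θj n j = (2 * ((j : ℕ) : ℝ) + 1) * Real.pi := by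
  rw [θj, mul_div_cancel₀ _ (h2n n)]

lemma theta_sin : Real.sin ((2 * (n : ℝ) + 1) * θj n j) = 0 := by
  rw [theta_mul, show (2 * ((j : ℕ) : ℝ) + 1) * Real.pi
      = ((2 * (j : ℕ) + 1 : ℕ) : ℝ) * Real.pi by push_cast; ring]
  exact Real.sin_nat_mul_pi _

lemma theta_cos : Real.cos ((2 * (n : ℝ) + 1) * θj n j) = -1 := by
  rw [theta_mul, show (2 * ((j : ℕ) : ℝ) + 1) * Real.pi
      = ((j : ℕ) : ℝ) * (2 * Real.pi) + Real.pi by ring]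
  exact Real.cos_nat_mul_two_pi_add_pi _

lemma cos_theta_ne : Real.cos (θj n j) ≠ 0 := by
  intro h
  obtain ⟨k, hk⟩ := Real.cos_eq_zero_iff.mp h
  rw [θj] at hk
  have hπ := Real.pi_ne_zero
  have h2 := h2n n
  field_simp at hk
  -- hk : (2 * ↑↑j + 1) * π * 2 = (2 * ↑k + 1) * π * (2 * ↑n + 1)  (some arrangement)
  have hz : 2 * (2 * (j : ℤ) + 1) = (2 * k + 1) * (2 * (n : ℤ) + 1) := by
    have h' : (2 * (2 * ((j : ℕ) : ℝ) + 1)) * Real.pi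
        = ((2 * (k : ℝ) + 1) * (2 * (n : ℝ) + 1)) * Real.pi := by linear_combination Real.pi * hk
    have := mul_right_cancel₀ hπ h'
    exact_mod_cast this
  obtain ⟨m, hm⟩ : Odd ((2 * k + 1) * (2 * (n : ℤ) + 1)) :=
    ⟨2 * k * (n : ℤ) + k + n, by ring⟩
  omega

lemma sin_two_theta_ne : Real.sin (2 * θj n j) ≠ 0 := by
  intro h
  obtain ⟨m, hm⟩ := Real.sin_eq_zero_iff.mp h
  rw [θj] at hm
  have hπ := Real.pi_ne_zero
  have h2 := h2n n
  field_simp at hm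
  have hz : (m : ℤ) * (2 * (n : ℤ) + 1) = 2 * (2 * (j : ℤ) + 1) := by
    have h' : ((m : ℝ) * (2 * (n : ℝ) + 1)) * Real.pi
        = (2 * (2 * ((j : ℕ) : ℝ) + 1)) * Real.pi := by linear_combination Real.pi * hm
    have := mul_right_cancel₀ hπ h'
    exact_mod_cast this
  have hev : Even ((m : ℤ) * (2 * (n : ℤ) + 1)) := ⟨2 * (j : ℤ) + 1, by omega⟩
  have hm2 : Even (m : ℤ) := by
    rcases Int.even_mul.mp hev with h | h
    · exact h
    · exfalso; rcases h with ⟨r, hr⟩; omega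
  obtain ⟨r, hr⟩ := hm2
  have hj : (j : ℤ) < n := by exact_mod_cast j.isLt
  have hrz : r * (2 * (n : ℤ) + 1) = 2 * (j : ℤ) + 1 := by
    have : (r + r) * (2 * (n : ℤ) + 1) = 2 * (2 * (j : ℤ) + 1) := by rw [← hr]; exact hz
    linarith
  have hjpos : (0 : ℤ) < 2 * (j : ℤ) + 1 := by positivity
  rcases le_or_gt r 0 with hr0 | hr0
  · nlinarith
  · have : (1 : ℤ) ≤ r := hr0
    nlinarith

lemma eigVec_ne_zero : eigVec n θ ≠ 0 → True := fun _ => trivial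

end theta

section main

variable (n : ℕ) (j : Fin n)

lemma eigVec_ne : eigVec n (θj n j) ≠ 0 := by
  intro h
  have h0 : (0 : ℕ) < n := j.pos
  have := congrFun h ⟨0, h0⟩
  simp only [eigVec, Pi.zero_apply] at this
  apply sin_two_theta_ne n j
  rw [show (2 : ℝ) * θj n j = (2 * ((0 : ℕ) : ℝ) + 2) * θj n j by norm_num]
  simpa using this

noncomputable def lamj (n : ℕ) (j : Fin n) : ℝ :=
  (-1 : ℝ) ^ (n + 1) / (2 * Real.cos (θj n j))

lemma cj_ne : ((-1 : ℝ) ^ (n + 1) * (2 * Real.cos (θj n j))) ≠ 0 := by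
  apply mul_ne_zero
  · exact pow_ne_zero _ (by norm_num)
  · exact mul_ne_zero two_ne_zero (cos_theta_ne n j)

lemma lamj_eq_inv :
    lamj n j = ((-1 : ℝ) ^ (n + 1) * (2 * Real.cos (θj n j)))⁻¹ := by
  have hc := cos_theta_ne n j
  have h4 := neg_one_sq_pow (n + 1)
  rw [eq_comm, inv_eq_iff_eq_inv, eq_comm, inv_eq_of_mul_eq_one_right ?_]
  rw [lamj]
  field_simp
  linear_combination h4

lemma hankelM_mulVec :
    (hankelM n).mulVec (eigVec n (θj n j)) = lamj n j • eigVec n (θj n j) := by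
  set θ := θj n j
  set v := eigVec n θ with hv
  set c := ((-1 : ℝ) ^ (n + 1) * (2 * Real.cos θ)) with hcdef
  have h1 : (hankelN n).mulVec v = c • v := hankelN_mulVec n θ (theta_sin n j) (theta_cos n j)
  have h2 : (hankelM n).mulVec ((hankelN n).mulVec v) = v := by
    rw [Matrix.mulVec_mulVec, hankelM_mul_hankelN, Matrix.one_mulVec]
  rw [h1, Matrix.mulVec_smul] at h2
  rw [lamj_eq_inv]
  rw [eq_inv_smul_iff₀ (cj_ne n j)]
  exact h2

lemma lamj_mem : lamj n j ∈ spectrum ℝ (hankelM n) := by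
  rw [spectrum.mem_iff]
  intro hU
  have hdet := (Matrix.isUnit_iff_isUnit_det _).mp hU
  have h0 : ∃ v ≠ 0,
      (algebraMap ℝ (Matrix (Fin n) (Fin n) ℝ) (lamj n j) - hankelM n) *ᵥ v = 0 := by
    refine ⟨eigVec n (θj n j), eigVec_ne n j, ?_⟩
    rw [Matrix.sub_mulVec, Algebra.algebraMap_eq_smul_one, Matrix.smul_mulVec,
      Matrix.one_mulVec, hankelM_mulVec n j, sub_self]
  rw [Matrix.exists_mulVec_eq_zero_iff] at h0
  rw [h0] at hdet
  simpa using hdet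

lemma charpoly_eval' (A : Matrix (Fin n) (Fin n) ℝ) (μ : ℝ) :
    A.charpoly.eval μ = (algebraMap ℝ (Matrix (Fin n) (Fin n) ℝ) μ - A).det := by
  rw [Matrix.charpoly, ← Polynomial.coe_evalRingHom, RingHom.map_det]
  congr 1
  ext i k
  simp only [Matrix.map_apply, Matrix.charmatrix_apply, Matrix.sub_apply,
    Matrix.diagonal_apply, Matrix.algebraMap_matrix_apply, Polynomial.coe_evalRingHom,
    Polynomial.eval_sub, Polynomial.eval_C, Algebra.algebraMap_self, RingHom.id_apply]
  by_cases h : i = k <;> simp [h]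

lemma spectrum_root (μ : ℝ) (hμ : μ ∈ spectrum ℝ (hankelM n)) :
    (hankelM n).charpoly.IsRoot μ := by
  rw [spectrum.mem_iff] at hμ
  have hdet : (algebraMap ℝ (Matrix (Fin n) (Fin n) ℝ) μ - hankelM n).det = 0 := by
    by_contra h
    exact hμ ((Matrix.isUnit_iff_isUnit_det _).mpr (isUnit_iff_ne_zero.mpr h))
  rw [Polynomial.IsRoot, charpoly_eval', hdet]

end main

lemma theta_mem (n : ℕ) (j : Fin n) : θj n j ∈ Set.Icc 0 Real.pi := by
  have hπ := Real.pi_pos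
  have hj : ((j : ℕ) : ℝ) + 1 ≤ (n : ℝ) := by exact_mod_cast j.isLt
  constructor
  · rw [θj]; positivity
  · rw [θj, div_le_iff₀ (by positivity)]
    nlinarith

lemma lamj_inj (n : ℕ) : Function.Injective (lamj n) := by
  intro a b h
  have ha := cos_theta_ne n a
  have hb := cos_theta_ne n b
  have hpow : ((-1 : ℝ) ^ (n + 1)) ≠ 0 := pow_ne_zero _ (by norm_num)
  rw [lamj, lamj] at h
  have hcc : Real.cos (θj n a) = Real.cos (θj n b) := by
    field_simp at h
    linarith
  have hθ : θj n a = θj n b := Real.injOn_cos (theta_mem n a) (theta_mem n b) hcc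
  have hπ := Real.pi_ne_zero
  have h2 := h2n n
  rw [θj, θj, div_eq_div_iff h2 h2] at hθ
  have h3 := mul_right_cancel₀ h2 hθ
  have h4 := mul_right_cancel₀ hπ h3
  have : ((a : ℕ) : ℝ) = ((b : ℕ) : ℝ) := by linarith
  exact Fin.ext (by exact_mod_cast this)

/-- The eigenvalues of `M_n` are
`λ_j = (−1)^{n+1} / (2 cos((2j−1)π/(2n+1)))`, `j = 1,…,n`, and they are
pairwise distinct. -/
theorem hankelM_eigenvalues (n : ℕ) :
    spectrum ℝ (hankelM n) =
      Set.range (fun j : Fin n =>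
        (-1 : ℝ) ^ (n + 1) /
          (2 * Real.cos ((2 * (j : ℕ) + 1) * Real.pi / (2 * n + 1)))) ∧
    Function.Injective (fun j : Fin n =>
      (-1 : ℝ) ^ (n + 1) /
        (2 * Real.cos ((2 * (j : ℕ) + 1) * Real.pi / (2 * n + 1)))) := by
  have hInj : Function.Injective (lamj n) := lamj_inj n
  constructor
  · ext μ
    simp only [Set.mem_range]
    constructor
    · intro hμ
      have hroot := spectrum_root n μ hμ
      have hmono := (hankelM n).charpoly_monic
      set T := (hankelM n).charpoly.roots.toFinset with hT
      set S := Finset.image (lamj n) Finset.univ with hS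
      have hST : S ⊆ T := by
        intro x hx
        rw [hS, Finset.mem_image] at hx
        obtain ⟨j, _, rfl⟩ := hx
        rw [hT, Multiset.mem_toFinset, Polynomial.mem_roots hmono.ne_zero]
        exact spectrum_root n _ (lamj_mem n j)
      have hcards : T.card ≤ S.card := by
        have h1 : T.card ≤ (hankelM n).charpoly.natDegree :=
          le_trans (Multiset.toFinset_card_le _) (Polynomial.card_roots' _)
        rw [Matrix.charpoly_natDegree_eq_dim, Fintype.card_fin] at h1
        rw [hS, Finset.card_image_of_injective _ hInj, Finset.card_univ, Fintype.card_fin]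
        exact h1
      have hTS : S = T := Finset.eq_of_subset_of_card_le hST hcards
      have hμT : μ ∈ T := by
        rw [hT, Multiset.mem_toFinset, Polynomial.mem_roots hmono.ne_zero]
        exact hroot
      rw [← hTS, hS, Finset.mem_image] at hμT
      obtain ⟨j, _, hj⟩ := hμT
      exact ⟨j, hj⟩
    · rintro ⟨j, rfl⟩
      exact lamj_mem n j
  · exact hInj
end

section
/- Let S = ⋃_{n≥1} { (−1)^{n+1}/(2 cos((2j−1)π/(2n+1))) : j = 1,…,n }. Then the closure of S in ℝ is (−∞, −1/2] ∪ [1/2, ∞). -/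
open Real Set
private lemma cos_ne_aux (a b : ℕ) :
    Real.cos ((2 * (a:ℝ) + 1) * Real.pi / (2 * (b:ℝ) + 1)) ≠ 0 := by
  intro h
  rw [Real.cos_eq_zero_iff] at h
  obtain ⟨k, hk⟩ := h
  have hπ := Real.pi_ne_zero
  have hb : (2 * (b:ℝ) + 1) ≠ 0 := by positivity
  field_simp at hk
  have h2 : (2 * (a:ℝ) + 1) * 2 = (2 * (k:ℝ) + 1) * (2 * (b:ℝ) + 1) :=
    by linear_combination hk
  have h3 : (2 * (a:ℤ) + 1) * 2 = (2 * k + 1) * (2 * (b:ℤ) + 1) := by exact_mod_cast h2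
  have he : Even ((2 * (a:ℤ) + 1) * 2) := ⟨2 * a + 1, by ring⟩
  rw [h3] at he
  exact (Int.not_odd_iff_even.mpr he) ((odd_two_mul_add_one k).mul (odd_two_mul_add_one (b:ℤ)))

/-- The closure of the set of all adjacency eigenvalues of the connected
anti-regular graphs with loops `G_n`, `n ≥ 1`, is `(−∞, −1/2] ∪ [1/2, ∞)`. -/
theorem antiRegular_eigenvalues_closure :
    closure {x : ℝ | ∃ n : ℕ, 1 ≤ n ∧ ∃ j : Fin n,
        x = (-1 : ℝ) ^ (n + 1) /
          (2 * Real.cos ((2 * (j : ℕ) + 1) * Real.pi / (2 * n + 1)))} =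
      Set.Iic (-(1 : ℝ) / 2) ∪ Set.Ici ((1 : ℝ) / 2) := by
  apply Set.Subset.antisymm
  · apply closure_minimal
    · rintro x ⟨n, hn, j, rfl⟩
      set α := (2 * ((j : ℕ) : ℝ) + 1) * Real.pi / (2 * (n : ℝ) + 1) with hαdef
      have hcos : Real.cos α ≠ 0 := cos_ne_aux j n
      have habs : |Real.cos α| ≤ 1 := Real.abs_cos_le_one α
      have habs0 : 0 < |Real.cos α| := abs_pos.mpr hcos
      have h1 : (1:ℝ)/2 ≤ |(-1:ℝ)^(n+1) / (2 * Real.cos α)| := by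
        rw [abs_div, abs_pow, abs_neg, abs_one, one_pow, abs_mul, abs_two,
          div_le_div_iff₀ (by norm_num) (by positivity)]
        nlinarith
      rcases le_abs.mp h1 with h | h
      · right; exact h
      · left; simp only [Set.mem_Iic]; linarith
    · exact isClosed_Iic.union isClosed_Ici
  · intro y hy
    rw [Metric.mem_closure_iff]
    intro ε hε
    have hy0 : y ≠ 0 := by
      rcases hy with h | h
      · simp only [Set.mem_Iic] at h; intro h0; rw [h0] at h; norm_num at h
      · simp only [Set.mem_Ici] at h; intro h0; rw [h0] at h; norm_num at h
    set c : ℝ := 1 / (2 * y) with hcdef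
    have hc1 : -1 ≤ c ∧ c ≤ 1 := by
      rcases hy with h | h
      · simp only [Set.mem_Iic] at h
        constructor
        · rw [hcdef, le_div_iff_of_neg (by linarith)]; linarith
        · have : c < 0 := div_neg_of_pos_of_neg one_pos (by linarith)
          linarith
      · simp only [Set.mem_Ici] at h
        constructor
        · have : 0 < c := div_pos one_pos (by linarith)
          linarith
        · rw [hcdef, div_le_one (by linarith)]; linarith
    have hc0 : c ≠ 0 := by
      rw [hcdef]
      exact one_div_ne_zero (by intro h; exact hy0 (by linarith [h] )) -- fix below
    set θ := Real.arccos c with hθdef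
    have hcosθ : Real.cos θ = c := Real.cos_arccos hc1.1 hc1.2
    have hθ0 : 0 ≤ θ := Real.arccos_nonneg c
    have hθπ : θ ≤ π := Real.arccos_le_pi c
    have hgc : ContinuousAt (fun α => 1 / (2 * Real.cos α)) θ := by
      apply ContinuousAt.div continuousAt_const
      · exact continuousAt_const.mul Real.continuous_cos.continuousAt
      · rw [hcosθ]; exact mul_ne_zero two_ne_zero hc0
    rw [Metric.continuousAt_iff] at hgc
    obtain ⟨δ, hδ, hball⟩ := hgc ε hε
    obtain ⟨N, hN⟩ := exists_nat_gt (2 * π / δ)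
    set n : ℕ := 2 * N + 1 with hndef
    have hn1 : 1 ≤ n := by omega
    have hpos : (0:ℝ) < 2 * (n : ℝ) + 1 := by positivity
    have h2n1 : 2 * π / δ < 2 * (n : ℝ) + 1 := by
      have : (N : ℝ) ≤ (n : ℝ) := by exact_mod_cast Nat.le_of_lt (by omega)
      push_cast
      linarith
    set s : ℝ := θ * (2 * (n : ℝ) + 1) / π with hsdef
    have hs0 : 0 ≤ s := by positivity
    have hs_le : s ≤ 2 * (n:ℝ) + 1 := by
      rw [hsdef, div_le_iff₀ Real.pi_pos]
      nlinarith [Real.pi_pos]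
    set j : ℕ := min (n - 1) ⌊s / 2⌋₊ with hjdef
    have hjn : j < n := lt_of_le_of_lt (min_le_left _ _) (by omega)
    have key : |(2 * (j:ℝ) + 1) - s| ≤ 2 := by
      rcases le_or_gt (⌊s / 2⌋₊) (n - 1) with h | h
      · have hj : j = ⌊s / 2⌋₊ := min_eq_right h
        have h1 : ((⌊s / 2⌋₊ : ℝ)) ≤ s / 2 := Nat.floor_le (by positivity)
        have h2 : s / 2 < (⌊s / 2⌋₊ : ℝ) + 1 := Nat.lt_floor_add_one _
        rw [hj, abs_le]; constructor <;> linarith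
      · have hj : j = n - 1 := min_eq_left (le_of_lt h)
        have hfl : (n : ℝ) ≤ s / 2 := by
          have h4 : n ≤ ⌊s / 2⌋₊ := by omega
          calc (n:ℝ) ≤ (⌊s / 2⌋₊ : ℝ) := by exact_mod_cast h4
            _ ≤ s / 2 := Nat.floor_le (by positivity)
        have hcast : ((j : ℝ)) = (n : ℝ) - 1 := by
          rw [hj]; push_cast [hn1]; ring
        rw [abs_le, hcast]; constructor <;> linarith
    have hαθ : |((2 * (j:ℝ) + 1) * π / (2 * (n:ℝ) + 1)) - θ| < δ := by
      have heq : ((2 * (j:ℝ) + 1) * π / (2 * (n:ℝ) + 1)) - θ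
          = ((2 * (j:ℝ) + 1) - s) * π / (2 * (n:ℝ) + 1) := by
        rw [hsdef]; field_simp
      rw [heq, abs_div, abs_mul, abs_of_pos Real.pi_pos, abs_of_pos hpos,
        div_lt_iff₀ hpos]
      have : |(2 * (j:ℝ) + 1) - s| * π ≤ 2 * π :=
        mul_le_mul_of_nonneg_right key Real.pi_pos.le
      have h5 : 2 * π < δ * (2 * (n:ℝ) + 1) := by
        rw [div_lt_iff₀ hδ] at h2n1; linarith
      linarith
    refine ⟨1 / (2 * Real.cos ((2 * (j:ℝ) + 1) * π / (2 * (n:ℝ) + 1))), ⟨n, hn1, ⟨j, hjn⟩, ?_⟩, ?_⟩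
    · have hev : (-1:ℝ)^(n+1) = 1 := Even.neg_one_pow ⟨N+1, by omega⟩
      rw [hev]
    · have hb := hball (x := (2 * (j:ℝ) + 1) * π / (2 * (n:ℝ) + 1))
        (by rw [Real.dist_eq]; exact hαθ)
      have hgθ : 1 / (2 * Real.cos θ) = y := by
        rw [hcosθ, hcdef]
        field_simp
      rw [dist_comm]
      rw [hgθ] at hb
      exact hb
end
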